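/- Let n ≥ 1 and let a₀, a₁, …, a_n be elements of a field F of characteristic zero with a₀ ≠ 0. Let A be the n×(n+1) matrix with A_{i,j} = a_{j−i} for all 1 ≤ i ≤ n, i ≤ j ≤ n+1, and A_{i,j} = 0 for j < i (the completely non-local clockwork mass matrix with uniform couplings). Define Λ₀ ∈ F^{n+1} by Λ₀(K) = Σ ((k₁+k₂+⋯+k_n)! / (k₁!·k₂!⋯k_n!)) · Π_{m=1}^{n} (−a_m/a₀)^{k_m}, where the sum runs over all tuples (k₁,…,k_n) of nonnegative integers satisfying k₁ + 2k₂ + ⋯ + n·k_n = n+1−K. Then A · Λ₀ = 0, Λ₀(n+1) = 1, and Λ₀ spans the (one-dimensional) kernel of A. -/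

import Mathlib

open Finset PowerSeries

section Stmt12Aux

variable {F : Type*} [Field F] (n : ℕ) (a : ℕ → F)

noncomputable def stmt12B : F⟦X⟧ :=
  ∑ m ∈ Finset.range n, PowerSeries.C (-(a (m+1)) / a 0) * X ^ (m+1)

lemma stmt12_coeff_B (t : ℕ) :
    coeff (R := F) t (stmt12B n a) = if 1 ≤ t ∧ t ≤ n then -(a t) / a 0 else 0 := by
  rw [stmt12B, map_sum]
  simp only [coeff_C_mul, coeff_X_pow, mul_ite, mul_one, mul_zero]
  by_cases h : 1 ≤ t ∧ t ≤ n
  · rw [Finset.sum_eq_single (t-1)]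
    · rw [if_pos (by omega), if_pos h, Nat.sub_add_cancel h.1]
    · intro m hm hne
      rw [if_neg (by simp at hm ⊢; omega)]
    · intro hm
      exact absurd (Finset.mem_range.mpr (by omega)) hm
  · rw [if_neg h]
    apply Finset.sum_eq_zero
    intro m hm
    rw [if_neg (by simp at hm ⊢; omega)]

lemma stmt12_coeff_Bpow (p d : ℕ) (h : d < p) : coeff (R := F) d (stmt12B n a ^ p) = 0 := by
  have hX : (X : F⟦X⟧) ∣ stmt12B n a := by
    rw [PowerSeries.X_dvd_iff, ← coeff_zero_eq_constantCoeff_apply, stmt12_coeff_B]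
    simp
  exact (PowerSeries.X_pow_dvd_iff.mp (pow_dvd_pow_of_dvd hX p)) d h

noncomputable def stmt12S (d : ℕ) : F := ∑ p ∈ range (d+1), coeff (R := F) d (stmt12B n a ^ p)

lemma stmt12S_eq_range {d N : ℕ} (h : d < N) :
    stmt12S n a d = ∑ p ∈ range N, coeff (R := F) d (stmt12B n a ^ p) := by
  rw [stmt12S]
  exact Finset.sum_subset (Finset.range_subset_range.mpr (by omega))
    (fun p hp hp' => stmt12_coeff_Bpow n a p d (by simp at hp hp'; omega))

lemma stmt12_geom : (1 - stmt12B n a) * PowerSeries.mk (stmt12S n a) = 1 := by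
  ext d
  rw [sub_mul, one_mul, map_sub, coeff_mul]
  have h1 : ∀ x ∈ Finset.HasAntidiagonal.antidiagonal d,
      coeff (R := F) x.1 (stmt12B n a) * coeff (R := F) x.2 (PowerSeries.mk (stmt12S n a))
        = ∑ q ∈ range (d+1), coeff (R := F) x.1 (stmt12B n a) * coeff (R := F) x.2 (stmt12B n a ^ q) := by
    intro x hx
    rw [coeff_mk, stmt12S_eq_range n a (N := d+1) (by simp at hx; omega), Finset.mul_sum]
  rw [Finset.sum_congr rfl h1, Finset.sum_comm]
  have h2 : ∀ q ∈ range (d+1),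
      ∑ x ∈ Finset.HasAntidiagonal.antidiagonal d, coeff (R := F) x.1 (stmt12B n a) * coeff (R := F) x.2 (stmt12B n a ^ q)
        = coeff (R := F) d (stmt12B n a ^ (q+1)) := by
    intro q hq
    rw [pow_succ', coeff_mul]
  rw [Finset.sum_congr rfl h2]
  have h3 : ∑ q ∈ range (d+1), coeff (R := F) d (stmt12B n a ^ (q+1))
      = ∑ q ∈ range (d+2), coeff (R := F) d (stmt12B n a ^ q) - coeff (R := F) d (stmt12B n a ^ 0) := by
    rw [Finset.sum_range_succ' (fun q => coeff (R := F) d (stmt12B n a ^ q)) (d+1)]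
    ring
  rw [h3, Finset.sum_range_succ, stmt12_coeff_Bpow n a (d+1) d (by omega), coeff_mk]
  rw [pow_zero]
  show stmt12S n a d - (stmt12S n a d + 0 - coeff (R := F) d 1) = coeff (R := F) d 1
  ring

lemma stmt12_rec (ha : a 0 ≠ 0) (d : ℕ) (h1 : 1 ≤ d) (h2 : d ≤ n) :
    ∑ t ∈ range (d+1), a t * stmt12S n a (d - t) = 0 := by
  have hg := congrArg (coeff (R := F) d) (stmt12_geom n a)
  rw [coeff_mul] at hg
  simp only [map_sub, coeff_one, sub_mul, coeff_mk] at hg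
  rw [Finset.sum_sub_distrib] at hg
  rw [Finset.Nat.sum_antidiagonal_eq_sum_range_succ_mk] at hg
  rw [Finset.Nat.sum_antidiagonal_eq_sum_range_succ_mk] at hg
  simp only [if_neg (by omega : ¬ d = 0)] at hg
  -- hg : ∑ t in range (d+1), (if t = 0 then 1 else 0) * S (d-t)
  --      - ∑ t in range (d+1), coeff t B * S (d-t) = 0
  have e1 : ∑ t ∈ range (d+1), (if t = 0 then (1:F) else 0) * stmt12S n a (d - t)
      = stmt12S n a d := by
    rw [Finset.sum_eq_single 0] <;> simp +contextual
  rw [e1] at hg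
  -- so S d = ∑ t in range (d+1), coeff t B * S (d-t)
  have hS : stmt12S n a d = ∑ t ∈ range (d+1), coeff (R := F) t (stmt12B n a) * stmt12S n a (d - t) := by
    exact sub_eq_zero.mp hg
  have e2 : ∑ t ∈ range (d+1), a t * stmt12S n a (d - t)
      = a 0 * stmt12S n a d + ∑ t ∈ range d, a (t+1) * stmt12S n a (d - (t+1)) := by
    rw [Finset.sum_range_succ' (fun t => a t * stmt12S n a (d - t)) d]
    simp [add_comm]
  rw [e2, hS, Finset.mul_sum]
  rw [Finset.sum_range_succ' (fun t => a 0 * (coeff (R := F) t (stmt12B n a) * stmt12S n a (d - t))) d]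
  rw [stmt12_coeff_B, if_neg (by omega)]
  simp only [mul_zero, zero_mul, add_zero]
  rw [← Finset.sum_add_distrib]
  apply Finset.sum_eq_zero
  intro t ht
  rw [stmt12_coeff_B, if_pos ⟨by omega, by simp at ht; omega⟩]
  field_simp
  ring

lemma stmt12_coeff_Bpow_eq (p d : ℕ) :
    coeff (R := F) d (stmt12B n a ^ p) =
      ∑ k ∈ (piAntidiag (range n) p).filter
          (fun k => ∑ m ∈ range n, (m+1) * k m = d),
        (Nat.multinomial (range n) k : F) * ∏ m ∈ range n, (-(a (m+1)) / a 0) ^ k m := by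
  rw [stmt12B, Finset.sum_pow_eq_sum_piAntidiag, map_sum, Finset.sum_filter]
  refine Finset.sum_congr rfl fun k hk => ?_
  have hprod : ∏ m ∈ range n, (PowerSeries.C (-(a (m+1)) / a 0) * X ^ (m+1)) ^ k m
      = PowerSeries.C (∏ m ∈ range n, (-(a (m+1)) / a 0) ^ k m)
        * X ^ (∑ m ∈ range n, (m+1) * k m) := by
    rw [map_prod, ← Finset.prod_pow_eq_pow_sum, ← Finset.prod_mul_distrib]
    refine Finset.prod_congr rfl fun m _ => ?_
    rw [mul_pow, map_pow, ← pow_mul]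
  rw [hprod, ← map_natCast (PowerSeries.C (R := F)) (Nat.multinomial (range n) k), ← mul_assoc,
    ← map_mul, coeff_C_mul, coeff_X_pow]
  by_cases h : ∑ m ∈ range n, (m+1) * k m = d
  · rw [if_pos h, if_pos h.symm, mul_one]
  · rw [if_neg h, if_neg (fun hh => h hh.symm), mul_zero]

lemma stmt12_mult_range (N : ℕ) (g : ℕ → ℕ) :
    Nat.multinomial (range N) g
      = Nat.multinomial (univ : Finset (Fin N)) (fun m => g (m : ℕ)) := by
  unfold Nat.multinomial
  rw [Fin.sum_univ_eq_sum_range (fun m => g m) N,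
    Fin.prod_univ_eq_prod_range (fun m => Nat.factorial (g m)) N]

lemma stmt12S_eq (d : ℕ) (hd : d ≤ n) :
    stmt12S n a d = ∑ k ∈ Finset.univ.filter
        (fun k : Fin n → Fin (n+2) =>
          ∑ m : Fin n, ((m : ℕ) + 1) * ((k m : ℕ)) = d),
      (Nat.multinomial Finset.univ (fun m => (k m : ℕ)) : F) *
        ∏ m : Fin n, (-(a ((m : ℕ) + 1)) / a 0) ^ ((k m : ℕ)) := by
  have key : ∀ (x : (_ : ℕ) × (ℕ → ℕ)),
      x ∈ (range (d+1)).sigma (fun p => (piAntidiag (range n) p).filter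
        (fun k => ∑ m ∈ range n, (m+1) * k m = d)) →
      ((range n).sum x.2 = x.1 ∧ ∀ i, x.2 i ≠ 0 → i ∈ range n)
        ∧ ∑ m ∈ range n, (m+1) * x.2 m = d := by
    intro x hx
    obtain ⟨h1, h2⟩ := Finset.mem_sigma.mp hx
    obtain ⟨h3, h4⟩ := Finset.mem_filter.mp h2
    exact ⟨mem_piAntidiag.mp h3, h4⟩
  have bound : ∀ (x : (_ : ℕ) × (ℕ → ℕ)),
      x ∈ (range (d+1)).sigma (fun p => (piAntidiag (range n) p).filter
        (fun k => ∑ m ∈ range n, (m+1) * k m = d)) →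
      ∀ m : Fin n, x.2 (m : ℕ) < n + 2 := by
    intro x hx m
    obtain ⟨_, hw⟩ := key x hx
    have hterm : ((m : ℕ) + 1) * x.2 (m : ℕ) ≤ d := by
      rw [← hw]
      exact Finset.single_le_sum (f := fun m => (m+1) * x.2 m)
        (fun i _ => Nat.zero_le _) (Finset.mem_range.mpr m.isLt)
    have : x.2 (m : ℕ) ≤ ((m : ℕ) + 1) * x.2 (m : ℕ) :=
      Nat.le_mul_of_pos_left _ (Nat.succ_pos _)
    omega
  rw [stmt12S]
  simp only [stmt12_coeff_Bpow_eq]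
  rw [Finset.sum_sigma']
  refine Finset.sum_bij'
    (fun x hx => fun m : Fin n => (⟨x.2 (m : ℕ), bound x hx m⟩ : Fin (n+2)))
    (fun k _ => ⟨∑ m : Fin n, (k m : ℕ),
      fun m => if h : m < n then (k ⟨m, h⟩ : ℕ) else 0⟩)
    ?_ ?_ ?_ ?_ ?_
  · -- forward membership
    intro x hx
    obtain ⟨_, hw⟩ := key x hx
    refine Finset.mem_filter.mpr ⟨Finset.mem_univ _, ?_⟩
    show ∑ m : Fin n, ((m : ℕ) + 1) * x.2 (m : ℕ) = d
    rw [Fin.sum_univ_eq_sum_range (fun m => (m + 1) * x.2 m) n]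
    exact hw
  · -- backward membership
    intro k hk
    have hk' := (Finset.mem_filter.mp hk).2
    have e1 : ∑ m ∈ range n, (if h : m < n then (k ⟨m, h⟩ : ℕ) else 0)
        = ∑ m : Fin n, (k m : ℕ) := by
      rw [← Fin.sum_univ_eq_sum_range (fun m => if h : m < n then (k ⟨m, h⟩ : ℕ) else 0) n]
      exact Finset.sum_congr rfl fun m _ => by rw [dif_pos m.isLt]
    have e2 : ∑ m ∈ range n, (m + 1) * (if h : m < n then (k ⟨m, h⟩ : ℕ) else 0)
        = ∑ m : Fin n, ((m : ℕ) + 1) * (k m : ℕ) := by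
      rw [← Fin.sum_univ_eq_sum_range
        (fun m => (m + 1) * if h : m < n then (k ⟨m, h⟩ : ℕ) else 0) n]
      exact Finset.sum_congr rfl fun m _ => by rw [dif_pos m.isLt]
    have hle : ∑ m : Fin n, (k m : ℕ) ≤ ∑ m : Fin n, ((m : ℕ) + 1) * (k m : ℕ) :=
      Finset.sum_le_sum fun m _ => Nat.le_mul_of_pos_left _ (Nat.succ_pos _)
    have hsupp : ∀ i, (if h : i < n then (k ⟨i, h⟩ : ℕ) else 0) ≠ 0 → i ∈ range n := by
      intro i hi
      rw [Finset.mem_range]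
      by_contra hmn
      rw [dif_neg hmn] at hi
      exact hi rfl
    have hcard : (∑ m : Fin n, (k m : ℕ)) < d + 1 := by omega
    exact Finset.mem_sigma.mpr ⟨Finset.mem_range.mpr hcard,
      Finset.mem_filter.mpr ⟨mem_piAntidiag.mpr ⟨e1, hsupp⟩, e2.trans hk'⟩⟩
  · -- left inverse
    intro x hx
    obtain ⟨⟨hsum, hsupp⟩, _⟩ := key x hx
    refine Sigma.ext ?_ (heq_of_eq ?_)
    · show (∑ m : Fin n, x.2 (m : ℕ)) = x.1
      rw [Fin.sum_univ_eq_sum_range (fun m => x.2 m) n, hsum]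
    · show (fun m => if h : m < n then x.2 m else 0) = x.2
      funext m
      by_cases h : m < n
      · rw [dif_pos h]
      · rw [dif_neg h]
        by_contra h0
        exact h (Finset.mem_range.mp (hsupp m (fun hh => h0 hh.symm)))
  · -- right inverse
    intro k hk
    funext m
    apply Fin.ext
    show (if h : (m : ℕ) < n then (k ⟨(m : ℕ), h⟩ : ℕ) else 0) = (k m : ℕ)
    rw [dif_pos m.isLt]
  · -- values agree
    intro x hx
    show (Nat.multinomial (range n) x.2 : F) * ∏ m ∈ range n, (-(a (m + 1)) / a 0) ^ x.2 m
      = (Nat.multinomial Finset.univ (fun m : Fin n => x.2 (m : ℕ)) : F) *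
        ∏ m : Fin n, (-(a ((m : ℕ) + 1)) / a 0) ^ x.2 (m : ℕ)
    rw [stmt12_mult_range n x.2,
      Fin.prod_univ_eq_prod_range (fun m => (-(a (m + 1)) / a 0) ^ x.2 m) n]

end Stmt12Aux

/-- The completely non-local clockwork mass matrix with uniform
couplings (`A i j = a (j-i)` for `j ≥ i`, `0` otherwise, with `a 0 ≠ 0`) over a field
of characteristic zero has a one-dimensional kernel spanned by `Λ₀`, where the
`K`-th component (`1`-based) is the multinomial sum
`Λ₀ K = ∑ (k₁+⋯+kₙ)!/(k₁!⋯kₙ!) ∏ₘ (-aₘ/a₀)^(kₘ)` over tuples of nonnegative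
integers with `k₁ + 2k₂ + ⋯ + n·kₙ = n+1-K`; moreover `A ⬝ᵥ Λ₀ = 0` and the last
component of `Λ₀` equals `1`. (Each `kₘ` in a contributing tuple is at most `n+1`,
so the tuples are faithfully enumerated by `Fin n → Fin (n+2)`.) -/
theorem stmt_12 {F : Type*} [Field F] [CharZero F] (n : ℕ) (hn : 1 ≤ n)
    (a : ℕ → F) (ha : a 0 ≠ 0)
    (A : Matrix (Fin n) (Fin (n+1)) F)
    (hA : ∀ i j, A i j =
      if (i : ℕ) ≤ (j : ℕ) then a ((j : ℕ) - (i : ℕ)) else 0)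
    (Λ₀ : Fin (n+1) → F)
    (hΛ : ∀ K : Fin (n+1), Λ₀ K =
      ∑ k ∈ Finset.univ.filter
          (fun k : Fin n → Fin (n+2) =>
            ∑ m : Fin n, ((m : ℕ) + 1) * ((k m : ℕ)) = n - (K : ℕ)),
        (Nat.multinomial Finset.univ (fun m => (k m : ℕ)) : F) *
          ∏ m : Fin n, (-(a ((m : ℕ) + 1)) / a 0) ^ ((k m : ℕ))) :
    A.mulVec Λ₀ = 0 ∧ Λ₀ (Fin.last n) = 1 ∧
      LinearMap.ker A.mulVecLin = Submodule.span F {Λ₀} := by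
  have hΛS : ∀ K : Fin (n+1), Λ₀ K = stmt12S n a (n - (K : ℕ)) := fun K =>
    (hΛ K).trans (stmt12S_eq n a (n - (K : ℕ)) (by omega)).symm
  have hS0 : stmt12S n a 0 = 1 := by
    simp [stmt12S]
  have hlast : Λ₀ (Fin.last n) = 1 := by
    rw [hΛS, Fin.val_last, Nat.sub_self, hS0]
  have hmv : A.mulVec Λ₀ = 0 := by
    funext i
    show ∑ j : Fin (n+1), A i j * Λ₀ j = 0
    have key : ∑ j : Fin (n+1), A i j * Λ₀ j = ∑ j ∈ Finset.range (n+1),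
        (if (i : ℕ) ≤ j then a (j - (i : ℕ)) * stmt12S n a (n - j) else 0) := by
      rw [← Fin.sum_univ_eq_sum_range
        (fun j => if (i : ℕ) ≤ j then a (j - (i : ℕ)) * stmt12S n a (n - j) else 0) (n+1)]
      refine Finset.sum_congr rfl fun j _ => ?_
      show A i j * Λ₀ j
        = if (i : ℕ) ≤ (j : ℕ) then a ((j:ℕ) - (i : ℕ)) * stmt12S n a (n - (j:ℕ)) else 0
      rw [hA, hΛS]
      by_cases h : (i : ℕ) ≤ (j : ℕ)
      · rw [if_pos h, if_pos h]
      · rw [if_neg h, if_neg h, zero_mul]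
    rw [key]
    rw [Finset.range_eq_Ico, ← Finset.sum_Ico_consecutive _ (Nat.zero_le (i : ℕ)) (by omega : (i:ℕ) ≤ n+1)]
    have hz : ∑ j ∈ Finset.Ico 0 (i : ℕ),
        (if (i : ℕ) ≤ j then a (j - (i : ℕ)) * stmt12S n a (n - j) else 0) = 0 := by
      apply Finset.sum_eq_zero
      intro j hj
      rw [if_neg (by simp at hj; omega)]
    rw [hz, zero_add]
    have hco : (n + 1 : ℕ) = (i : ℕ) + (n - (i : ℕ) + 1) := by omega
    rw [hco, Finset.sum_Ico_eq_sum_range]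
    have hterm2 : ∀ t ∈ Finset.range ((i:ℕ) + (n - (i : ℕ) + 1) - (i:ℕ)),
        (if (i : ℕ) ≤ (i : ℕ) + t then a ((i:ℕ) + t - (i : ℕ)) * stmt12S n a (n - ((i:ℕ) + t)) else 0)
          = a t * stmt12S n a (n - (i : ℕ) - t) := by
      intro t ht
      rw [if_pos (by omega), Nat.add_sub_cancel_left]
      congr 2
      omega
    refine (Finset.sum_congr rfl hterm2).trans ?_
    have hrng : (i:ℕ) + (n - (i : ℕ) + 1) - (i:ℕ) = n - (i:ℕ) + 1 := by omega
    rw [hrng]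
    exact stmt12_rec n a ha (n - (i : ℕ)) (by omega) (by omega)
  refine ⟨hmv, hlast, ?_⟩
  -- kernel
  have hker : Λ₀ ∈ LinearMap.ker A.mulVecLin := by
    rw [LinearMap.mem_ker, Matrix.mulVecLin_apply, hmv]
  have hΛ0 : Λ₀ ≠ 0 := by
    intro h
    rw [h] at hlast
    exact one_ne_zero hlast.symm
  set A' : Matrix (Fin n) (Fin n) F := Matrix.of (fun i j => A i (Fin.castSucc j)) with hA'
  have htri : A'.BlockTriangular id := by
    intro i j hij
    show A i (Fin.castSucc j) = 0
    have hji : (j : ℕ) < (i : ℕ) := hij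
    rw [hA, if_neg (by rw [Fin.coe_castSucc]; omega)]
  have hdet : A'.det ≠ 0 := by
    rw [Matrix.det_of_upperTriangular htri]
    have : ∀ i : Fin n, A' i i = a 0 := by
      intro i
      show A i (Fin.castSucc i) = a 0
      rw [hA, Fin.coe_castSucc, if_pos (le_refl (i:ℕ)), Nat.sub_self]
    rw [Finset.prod_congr rfl (fun i _ => this i), Finset.prod_const, Finset.card_univ,
      Fintype.card_fin]
    exact pow_ne_zero n ha
  have hsurj : Function.Surjective A.mulVecLin := by
    intro y
    refine ⟨Fin.snoc ((A'⁻¹).mulVec y) 0, ?_⟩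
    show A.mulVec _ = y
    funext i
    rw [Matrix.mulVec, dotProduct]
    rw [Fin.sum_univ_castSucc]
    simp only [Fin.snoc_castSucc, Fin.snoc_last, mul_zero, add_zero]
    have : ∑ j : Fin n, A i (Fin.castSucc j) * (A'⁻¹).mulVec y j
        = (A' * A'⁻¹).mulVec y i := by
      rw [← Matrix.mulVec_mulVec]
      rfl
    rw [this, Matrix.mul_nonsing_inv A' (isUnit_iff_ne_zero.mpr hdet), Matrix.one_mulVec]
  have hrn := LinearMap.finrank_range_add_finrank_ker A.mulVecLin
  rw [LinearMap.range_eq_top.mpr hsurj, finrank_top] at hrn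
  have hdim : Module.finrank F (LinearMap.ker A.mulVecLin) = 1 := by
    have h1 : Module.finrank F (Fin (n+1) → F) = n + 1 := by simp
    have h2 : Module.finrank F (Fin n → F) = n := by simp
    omega
  have hspan : Module.finrank F (Submodule.span F {Λ₀}) = 1 :=
    finrank_span_singleton hΛ0
  exact (Submodule.eq_of_le_of_finrank_le
    (Submodule.span_le.mpr (Set.singleton_subset_iff.mpr hker))
    (by rw [hdim, hspan])).symm
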